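/- Let Y be a random variable on a probability space taking values in the natural numbers, and let d ≥ 2 be an integer. Then E[ dY/(Y+d−1) · 1_{Y ≥ 1} ] = d − d(d−1) ∫₀¹ z^{d−2} E[z^Y] dz, where E[z^Y] denotes the probability generating function of Y evaluated at z ∈ [0,1]. -/

import Mathlib

open MeasureTheory intervalIntegral

/-- For an ℕ-valued random variable `Y` on a probability space and an integer
`d ≥ 2`,
`E[dY/(Y+d-1) · 1_{Y≥1}] = d - d(d-1) ∫₀¹ z^{d-2} E[z^Y] dz`,
where `E[z^Y]` is the probability generating function of `Y`. -/
theorem mean_D4_integral_formula {Ω : Type*} [MeasurableSpace Ω]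
    (μ : Measure Ω) [IsProbabilityMeasure μ]
    (Y : Ω → ℕ) (hY : Measurable Y) (d : ℕ) (hd : 2 ≤ d) :
    (∫ ω, (if 1 ≤ Y ω then (d : ℝ) * (Y ω : ℝ) / ((Y ω : ℝ) + (d : ℝ) - 1) else 0) ∂μ)
      = (d : ℝ) - (d : ℝ) * ((d : ℝ) - 1) *
          ∫ z in (0 : ℝ)..1, z ^ (d - 2) * ∫ ω, z ^ (Y ω) ∂μ := by
  have hd1 : (1:ℝ) ≤ (d:ℝ) - 1 := by
    have : (2:ℝ) ≤ (d:ℝ) := by exact_mod_cast hd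
    linarith
  have hpos : ∀ n : ℕ, (0:ℝ) < (n:ℝ) + (d:ℝ) - 1 := fun n => by
    have : (0:ℝ) ≤ (n:ℝ) := Nat.cast_nonneg n
    linarith
  set ρ : Measure ℝ := volume.restrict (Set.Ioc (0:ℝ) 1) with hρ
  -- the exponent function
  set e : Ω → ℕ := fun ω => d - 2 + Y ω with he
  have he_meas : Measurable e := (measurable_from_top.comp hY)
  -- Step A: rewrite the inner integrand of the RHS
  have hinner : ∀ z : ℝ, z ^ (d-2) * ∫ ω, z ^ (Y ω) ∂μ = ∫ ω, z ^ (e ω) ∂μ := by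
    intro z
    rw [← MeasureTheory.integral_const_mul]
    congr 1; funext ω
    rw [he, pow_add]
  -- Step B: Fubini
  have hFmeas : Measurable fun p : ℝ × Ω => p.1 ^ (e p.2) :=
    measurable_fst.pow (he_meas.comp measurable_snd)
  have haemem : ∀ᵐ p ∂ρ.prod μ, p.1 ∈ Set.Ioc (0:ℝ) 1 := by
    rw [Measure.ae_prod_iff_ae_ae (measurable_fst measurableSet_Ioc)]
    filter_upwards [ae_restrict_mem measurableSet_Ioc] with z hz
    exact ae_of_all _ fun _ => hz
  have hFint : Integrable (Function.uncurry fun z (ω:Ω) => z ^ (e ω)) (ρ.prod μ) := by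
    refine ⟨(hFmeas.aestronglyMeasurable), ?_⟩
    refine HasFiniteIntegral.of_bounded (C := 1) ?_
    filter_upwards [haemem] with p hp
    simp only [Function.uncurry, Real.norm_eq_abs]
    rw [abs_of_nonneg (pow_nonneg hp.1.le _)]
    exact pow_le_one₀ hp.1.le hp.2
  have hswap : (∫ z, ∫ ω, z ^ (e ω) ∂μ ∂ρ) = ∫ ω, ∫ z, z ^ (e ω) ∂ρ ∂μ :=
    integral_integral_swap hFint
  -- Step C: compute the inner z-integral
  have hzint : ∀ ω : Ω, (∫ z, z ^ (e ω) ∂ρ) = 1 / ((Y ω : ℝ) + (d:ℝ) - 1) := by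
    intro ω
    have : (∫ z, z ^ (e ω) ∂ρ) = ∫ z in (0:ℝ)..1, z ^ (e ω) := by
      rw [intervalIntegral.integral_of_le (by norm_num : (0:ℝ) ≤ 1)]
    rw [this, integral_pow]
    have hcast : ((e ω : ℕ) : ℝ) + 1 = (Y ω : ℝ) + (d:ℝ) - 1 := by
      rw [he]
      push_cast [Nat.cast_sub hd]
      ring
    rw [one_pow, zero_pow (by omega : e ω + 1 ≠ 0)]
    rw [hcast]; ring
  -- integrability of 1/(Y+d-1)
  have hmeas_inv : Measurable fun ω => 1 / ((Y ω : ℝ) + (d:ℝ) - 1) := by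
    exact (measurable_from_top (f := fun n : ℕ => 1 / ((n:ℝ) + (d:ℝ) - 1))).comp hY
  have hint_inv : Integrable (fun ω => 1 / ((Y ω : ℝ) + (d:ℝ) - 1)) μ := by
    refine ⟨hmeas_inv.aestronglyMeasurable, HasFiniteIntegral.of_bounded (C := 1) ?_⟩
    refine ae_of_all _ fun ω => ?_
    rw [Real.norm_eq_abs, abs_of_nonneg (div_nonneg zero_le_one (hpos (Y ω)).le)]
    rw [div_le_one (hpos _)]
    have : (0:ℝ) ≤ (Y ω : ℝ) := Nat.cast_nonneg _
    linarith
  -- Step D: rewrite LHS integrand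
  have hLHS : (∫ ω, (if 1 ≤ Y ω then (d : ℝ) * (Y ω : ℝ) / ((Y ω : ℝ) + (d : ℝ) - 1) else 0) ∂μ)
      = ∫ ω, ((d:ℝ) - (d:ℝ) * ((d:ℝ) - 1) * (1 / ((Y ω : ℝ) + (d:ℝ) - 1))) ∂μ := by
    refine integral_congr_ae (ae_of_all _ fun ω => ?_)
    have hne := (hpos (Y ω)).ne'
    by_cases h : 1 ≤ Y ω
    · simp only [h, if_true]
      field_simp
      ring
    · have h0 : Y ω = 0 := by omega
      simp only [h, if_false, h0, Nat.cast_zero, nonpos_iff_eq_zero, one_ne_zero]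
      rw [zero_add, mul_assoc, mul_one_div_cancel (by linarith : (d:ℝ) - 1 ≠ 0), mul_one, sub_self]
  rw [hLHS]
  rw [integral_sub (integrable_const _) (hint_inv.const_mul _)]
  rw [MeasureTheory.integral_const, probReal_univ, smul_eq_mul, one_mul,
    MeasureTheory.integral_const_mul]
  congr 1
  congr 1
  have : (∫ z in (0 : ℝ)..1, z ^ (d - 2) * ∫ ω, z ^ (Y ω) ∂μ)
      = ∫ z, ∫ ω, z ^ (e ω) ∂μ ∂ρ := by
    rw [intervalIntegral.integral_of_le (by norm_num : (0:ℝ) ≤ 1)]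
    refine integral_congr_ae (ae_of_all _ fun z => hinner z)
  rw [this, hswap]
  exact integral_congr_ae (ae_of_all _ fun ω => hzint ω) |>.symm
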